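/- Let F_q be a finite field with q elements of characteristic greater than 2. If x, y, z, w ∈ F_q² are such that the line B = B(x,z) = B(y,w) is a well-defined common perpendicular bisector and B is non-isotropic, then ‖x−y‖ = ‖z−w‖. -/

import Mathlib

/-- The "norm" of a point of `F × F`: `‖(x₁,x₂)‖ = x₁² + x₂²`. -/
def nrm {F : Type*} [Field F] (x : F × F) : F := x.1 ^ 2 + x.2 ^ 2

/-- The perpendicular bisector of `a` and `b`: the set of points equidistant from both. -/
def bisector {F : Type*} [Field F] (a b : F × F) : Set (F × F) :=
  {c | nrm (c - a) = nrm (c - b)}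

/-- `l` is an isotropic affine line: its direction vector `d` satisfies `‖d‖ = 0`. -/
def IsIsotropicLine {F : Type*} [Field F] (l : Set (F × F)) : Prop :=
  ∃ d p : F × F, d ≠ 0 ∧ nrm d = 0 ∧ l = {x | ∃ t : F, x = t • d + p}

/-- A bisector is the line through the midpoint, perpendicular to `b - a`. -/
lemma bisector_eq_line {F : Type*} [Field F] (a b : F × F) (hab : a ≠ b) (h2 : (2:F) ≠ 0) :
    bisector a b =
      {c | ∃ t : F, c = t • ((-(b.2 - a.2), b.1 - a.1) : F × F) + (2⁻¹ : F) • (a + b)} := by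
  ext c
  simp only [bisector, nrm, Set.mem_setOf_eq, Prod.ext_iff, Prod.fst_sub, Prod.snd_sub,
    Prod.smul_fst, Prod.smul_snd, Prod.fst_add, Prod.snd_add, smul_eq_mul]
  constructor
  · intro h
    by_cases h1 : b.1 - a.1 = 0
    · have hb1 : b.1 = a.1 := sub_eq_zero.mp h1
      have hb2 : b.2 - a.2 ≠ 0 := by
        intro h2'
        exact hab (Prod.ext hb1 (sub_eq_zero.mp h2')).symm
      have key : (b.2 - a.2) * (c.2 * 2 - a.2 - b.2) = 0 := by
        linear_combination h - (2 * c.1 - a.1 - b.1) * hb1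
      have hc2 : c.2 * 2 = a.2 + b.2 := by
        have := (mul_eq_zero.mp key).resolve_left hb2
        linear_combination this
      refine ⟨-(c.1 - 2⁻¹ * (a.1 + b.1)) / (b.2 - a.2), ?_, ?_⟩
      · field_simp
        ring
      · rw [h1, mul_zero, zero_add]
        field_simp
        linear_combination hc2
    · refine ⟨(c.2 - 2⁻¹ * (a.2 + b.2)) / (b.1 - a.1), ?_, ?_⟩
      · field_simp
        linear_combination h
      · field_simp
        ring
  · rintro ⟨t, hc1, hc2⟩
    rw [hc1, hc2]
    field_simp
    ring

/-- If `x,y,z,w ∈ F_q²` are such that `B = B(x,z) = B(y,w)` is a well-defined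
(common) perpendicular bisector and `B` is non-isotropic, then `‖x−y‖ = ‖z−w‖`. -/
theorem distance_decomposition (F : Type) [Field F] [Fintype F]
    (hchar : 2 < ringChar F) (x y z w : F × F)
    (hxz : x ≠ z) (hyw : y ≠ w)
    (hB : bisector x z = bisector y w)
    (hiso : ¬ IsIsotropicLine (bisector x z)) :
    nrm (x - y) = nrm (z - w) := by
  have h2 : (2:F) ≠ 0 := Ring.two_ne_zero (by omega)
  rw [bisector_eq_line x z hxz h2, bisector_eq_line y w hyw h2] at hB
  have hn : ((2⁻¹:F) • (y + w)) ∈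
      {c : F × F | ∃ t : F, c = t • ((-(z.2 - x.2), z.1 - x.1) : F × F) + (2⁻¹ : F) • (x + z)} := by
    rw [hB]; exact ⟨0, by simp⟩
  have hnd : (((-(w.2 - y.2), w.1 - y.1) : F × F) + (2⁻¹:F) • (y + w)) ∈
      {c : F × F | ∃ t : F, c = t • ((-(z.2 - x.2), z.1 - x.1) : F × F) + (2⁻¹ : F) • (x + z)} := by
    rw [hB]; exact ⟨1, by rw [one_smul]⟩
  obtain ⟨t, ht⟩ := hn
  obtain ⟨t', ht'⟩ := hnd
  rw [Prod.ext_iff] at ht ht'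
  simp only [Prod.fst_add, Prod.snd_add, Prod.smul_fst, Prod.smul_snd, smul_eq_mul] at ht ht'
  obtain ⟨hn1, hn2⟩ := ht
  obtain ⟨hd1, hd2⟩ := ht'
  field_simp at hn1 hn2 hd1 hd2
  have hY1 : 4 * y.1 = 2*(x.1+z.1) + 4*t*(x.2-z.2) - 2*(t'-t)*(z.1-x.1) := by
    linear_combination 2 * hn1 - hd2 + hn2
  have hW1 : 4 * w.1 = 2*(x.1+z.1) + 4*t*(x.2-z.2) + 2*(t'-t)*(z.1-x.1) := by
    linear_combination 2 * hn1 + hd2 - hn2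
  have hY2 : 4 * y.2 = 2*(x.2+z.2) + 4*t*(z.1-x.1) - 2*(t'-t)*(z.2-x.2) := by
    linear_combination 2 * hn2 + hd1 - hn1
  have hW2 : 4 * w.2 = 2*(x.2+z.2) + 4*t*(z.1-x.1) + 2*(t'-t)*(z.2-x.2) := by
    linear_combination 2 * hn2 - hd1 + hn1
  have h16 : (16:F) ≠ 0 := by
    have := pow_ne_zero 4 h2
    norm_num at this
    exact this
  simp only [nrm, Prod.fst_sub, Prod.snd_sub]
  apply mul_left_cancel₀ h16
  linear_combination
      (4*y.1 + (2*(x.1+z.1) + 4*t*(x.2-z.2) - 2*(t'-t)*(z.1-x.1)) - 8*x.1) * hY1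
    + (4*y.2 + (2*(x.2+z.2) + 4*t*(z.1-x.1) - 2*(t'-t)*(z.2-x.2)) - 8*x.2) * hY2
    + (8*z.1 - 4*w.1 - (2*(x.1+z.1) + 4*t*(x.2-z.2) + 2*(t'-t)*(z.1-x.1))) * hW1
    + (8*z.2 - 4*w.2 - (2*(x.2+z.2) + 4*t*(z.1-x.1) + 2*(t'-t)*(z.2-x.2))) * hW2
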